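/- Let B be the open unit disk in ℝ² and let U : cl B → ℝ² be a continuous mapping such that the restriction of U to ∂B is injective and such that for every P ∈ ∂B there exists a neighborhood G of P with U injective on G ∩ cl B. Then there exists ρ ∈ (0,1) such that U is injective on cl B \ B_ρ, where B_ρ is the open disk of radius ρ centered at the origin. -/
import Mathlib


open Metric Set Filter

noncomputable section

local notation "ℝ²" => EuclideanSpace ℝ (Fin 2)

/-- **Lemma (topological).** A continuous map on the closed unit disk which is injective on
the boundary circle and a local homeomorphism at each boundary point is injective on some
closed annulus near the boundary. -/
theorem injective_on_annulus
    (U : ℝ² → ℝ²)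
    (hUcont : ContinuousOn U (closedBall 0 1))
    (hUinj : InjOn U (sphere 0 1))
    (hloc : ∀ P ∈ sphere (0 : ℝ²) 1, ∃ G ∈ nhds P, InjOn U (G ∩ closedBall 0 1)) :
    ∃ ρ : ℝ, 0 < ρ ∧ ρ < 1 ∧ InjOn U (closedBall 0 1 \ ball 0 ρ) := by
  by_contra h
  push_neg at h
  have key : ∀ n : ℕ, ∃ p : ℝ² × ℝ²,
      p.1 ∈ closedBall (0:ℝ²) 1 \ ball 0 (1 - 1/(n+2)) ∧
      p.2 ∈ closedBall (0:ℝ²) 1 \ ball 0 (1 - 1/(n+2)) ∧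
      U p.1 = U p.2 ∧ p.1 ≠ p.2 := by
    intro n
    have hn2 : (0:ℝ) < (n:ℝ) + 2 := by positivity
    have h1 : (0:ℝ) < 1 - 1/((n:ℝ)+2) := by
      have : 1/((n:ℝ)+2) ≤ 1/2 := by
        apply div_le_div_of_nonneg_left (by norm_num) (by norm_num)
        linarith [Nat.cast_nonneg (α := ℝ) n]
      linarith
    have h2 : 1 - 1/((n:ℝ)+2) < 1 := by
      have : 0 < 1/((n:ℝ)+2) := by positivity
      linarith
    have := h _ h1 h2
    rw [InjOn] at this
    push_neg at this
    obtain ⟨x, hx, y, hy, hxy, hne⟩ := this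
    exact ⟨(x, y), hx, hy, hxy, hne⟩
  choose p hp1 hp2 hp3 hp4 using key
  set x : ℕ → ℝ² := fun n => (p n).1 with hxdef
  set y : ℕ → ℝ² := fun n => (p n).2 with hydef
  have hxball : ∀ n, x n ∈ closedBall (0:ℝ²) 1 := fun n => (hp1 n).1
  have hyball : ∀ n, y n ∈ closedBall (0:ℝ²) 1 := fun n => (hp2 n).1
  obtain ⟨a, ha, φ, hφ, hxa⟩ :=
    (isCompact_closedBall (0:ℝ²) 1).tendsto_subseq hxball
  obtain ⟨b, hb, ψ, hψ, hyb⟩ :=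
    (isCompact_closedBall (0:ℝ²) 1).tendsto_subseq (fun n => hyball (φ n))
  set σ : ℕ → ℕ := φ ∘ ψ with hσdef
  have hσ : StrictMono σ := hφ.comp hψ
  have hxa' : Tendsto (fun n => x (σ n)) atTop (nhds a) := by
    have := hxa.comp hψ.tendsto_atTop
    exact this
  have hyb' : Tendsto (fun n => y (σ n)) atTop (nhds b) := hyb
  -- auxiliary limit: 1 - 1/(n+2) → 1
  have hlim : Tendsto (fun n : ℕ => 1 - 1/((n:ℝ)+2)) atTop (nhds 1) := by
    have h0 : Tendsto (fun n : ℕ => 1/((n:ℝ)+2)) atTop (nhds 0) := by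
      simp only [one_div]
      apply Tendsto.inv_tendsto_atTop
      exact tendsto_atTop_add_const_right _ 2 tendsto_natCast_atTop_atTop
    simpa using (tendsto_const_nhds (x := (1:ℝ))).sub h0
  -- norms lower bound
  have hnormx : ∀ n : ℕ, 1 - 1/((n:ℝ)+2) ≤ ‖x (σ n)‖ := by
    intro n
    have hmem := (hp1 (σ n)).2
    rw [mem_ball, dist_zero_right, not_lt] at hmem
    have hmono : 1 - 1/((n:ℝ)+2) ≤ 1 - 1/((σ n:ℝ)+2) := by
      have hle : (n:ℝ) ≤ (σ n : ℝ) := by exact_mod_cast (hσ.id_le n)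
      have : 1/((σ n:ℝ)+2) ≤ 1/((n:ℝ)+2) := by
        apply div_le_div_of_nonneg_left (by norm_num) (by positivity)
        linarith
      linarith
    linarith
  have hnormy : ∀ n : ℕ, 1 - 1/((n:ℝ)+2) ≤ ‖y (σ n)‖ := by
    intro n
    have hmem := (hp2 (σ n)).2
    rw [mem_ball, dist_zero_right, not_lt] at hmem
    have hmono : 1 - 1/((n:ℝ)+2) ≤ 1 - 1/((σ n:ℝ)+2) := by
      have hle : (n:ℝ) ≤ (σ n : ℝ) := by exact_mod_cast (hσ.id_le n)
      have : 1/((σ n:ℝ)+2) ≤ 1/((n:ℝ)+2) := by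
        apply div_le_div_of_nonneg_left (by norm_num) (by positivity)
        linarith
      linarith
    linarith
  have hasphere : a ∈ sphere (0:ℝ²) 1 := by
    rw [mem_sphere_zero_iff_norm]
    have hub : ‖a‖ ≤ 1 := by
      exact mem_closedBall_zero_iff.mp ha
    have hnorm_tendsto : Tendsto (fun n => ‖x (σ n)‖) atTop (nhds ‖a‖) :=
      (continuous_norm.tendsto a).comp hxa'
    have hlb : 1 ≤ ‖a‖ := le_of_tendsto_of_tendsto' hlim hnorm_tendsto hnormx
    linarith
  have hbsphere : b ∈ sphere (0:ℝ²) 1 := by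
    rw [mem_sphere_zero_iff_norm]
    have hub : ‖b‖ ≤ 1 := by
      exact mem_closedBall_zero_iff.mp hb
    have hnorm_tendsto : Tendsto (fun n => ‖y (σ n)‖) atTop (nhds ‖b‖) :=
      (continuous_norm.tendsto b).comp hyb'
    have hlb : 1 ≤ ‖b‖ := le_of_tendsto_of_tendsto' hlim hnorm_tendsto hnormy
    linarith
  -- U a = U b
  have haball : a ∈ closedBall (0:ℝ²) 1 := ha
  have hUxa : Tendsto (fun n => U (x (σ n))) atTop (nhds (U a)) := by
    apply (hUcont a haball).tendsto.comp
    rw [tendsto_nhdsWithin_iff]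
    exact ⟨hxa', Eventually.of_forall fun n => hxball (σ n)⟩
  have hUyb : Tendsto (fun n => U (y (σ n))) atTop (nhds (U b)) := by
    apply (hUcont b hb).tendsto.comp
    rw [tendsto_nhdsWithin_iff]
    exact ⟨hyb', Eventually.of_forall fun n => hyball (σ n)⟩
  have hUaUb : U a = U b := by
    have : (fun n => U (x (σ n))) = fun n => U (y (σ n)) := by
      funext n; exact hp3 (σ n)
    rw [this] at hUxa
    exact tendsto_nhds_unique hUxa hUyb
  have hab : a = b := hUinj hasphere hbsphere hUaUb
  subst hab
  obtain ⟨G, hG, hinjG⟩ := hloc a hasphere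
  have hxG : ∀ᶠ n in atTop, x (σ n) ∈ G := hxa' hG
  have hyG : ∀ᶠ n in atTop, y (σ n) ∈ G := hyb' hG
  obtain ⟨n, hxGn, hyGn⟩ := (hxG.and hyG).exists
  exact hp4 (σ n) (hinjG ⟨hxGn, hxball (σ n)⟩ ⟨hyGn, hyball (σ n)⟩ (hp3 (σ n)))
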